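/- Ostrowski comparison theorem: Let A be a real N×N matrix whose comparison matrix A‡, defined by (A‡)_ii = |A_ii| and (A‡)_ij = -|A_ij| for i ≠ j, is symmetric positive definite. Then A is invertible and |(A⁻¹)_{ij}| ≤ ((A‡)⁻¹)_{ij} for all 1 ≤ i, j ≤ N. -/

import Mathlib

open Matrix

/-- The comparison matrix `A‡`: diagonal entries `|A i i|`, off-diagonal entries `-|A i j|`. -/
def compMat {N : ℕ} (A : Matrix (Fin N) (Fin N) ℝ) : Matrix (Fin N) (Fin N) ℝ :=
  fun i j => if i = j then |A i i| else -|A i j|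

/-- Componentwise, `A‡ |u| ≤ |A u|`. -/
lemma compMat_mulVec_abs_le {N : ℕ} (A : Matrix (Fin N) (Fin N) ℝ) (u : Fin N → ℝ) (i : Fin N) :
    (compMat A *ᵥ fun k => |u k|) i ≤ |(A *ᵥ u) i| := by
  simp only [mulVec, dotProduct]
  rw [← Finset.add_sum_erase _ (fun j => compMat A i j * |u j|) (Finset.mem_univ i),
      ← Finset.add_sum_erase _ (fun j => A i j * u j) (Finset.mem_univ i)]
  have h1 : ∑ j ∈ Finset.univ.erase i, compMat A i j * |u j|
      = -∑ j ∈ Finset.univ.erase i, |A i j * u j| := by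
    rw [← Finset.sum_neg_distrib]
    refine Finset.sum_congr rfl fun j hj => ?_
    have hji : j ≠ i := Finset.ne_of_mem_erase hj
    simp [compMat, (Ne.symm hji : ¬ i = j), abs_mul, neg_mul]
  have h2 : |∑ j ∈ Finset.univ.erase i, A i j * u j|
      ≤ ∑ j ∈ Finset.univ.erase i, |A i j * u j| :=
    Finset.abs_sum_le_sum_abs _ _
  have h3 : compMat A i i * |u i| = |A i i * u i| := by simp [compMat, abs_mul]
  have h4 : |A i i * u i| - |∑ j ∈ Finset.univ.erase i, A i j * u j|
      ≤ |A i i * u i + ∑ j ∈ Finset.univ.erase i, A i j * u j| := by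
    have := abs_sub_abs_le_abs_sub (A i i * u i) (-∑ j ∈ Finset.univ.erase i, A i j * u j)
    rw [abs_neg, sub_neg_eq_add] at this
    exact this
  rw [h1, h3]
  linarith

/-- Inverse positivity: SPD + nonpositive off-diagonal entries implies `Mx ≥ 0 → x ≥ 0`. -/
lemma key2 {N : ℕ} (M : Matrix (Fin N) (Fin N) ℝ) (hM : M.PosDef)
    (hoff : ∀ i j, i ≠ j → M i j ≤ 0)
    (x : Fin N → ℝ) (hx : ∀ i, 0 ≤ (M *ᵥ x) i) : ∀ i, 0 ≤ x i := by
  set n : Fin N → ℝ := fun i => max (-x i) 0 with hn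
  set p : Fin N → ℝ := fun i => max (x i) 0 with hp
  have hnx : n = p - x := by
    funext i; simp [hn, hp]
    rcases le_total (x i) 0 with h | h
    · rw [max_eq_left (by linarith), max_eq_right h]; ring
    · rw [max_eq_right (by linarith), max_eq_left h]; ring
  have hn0 : n = 0 := by
    by_contra hne
    have hpos : 0 < n ⬝ᵥ M *ᵥ n := by simpa using hM.dotProduct_mulVec_pos hne
    have hq1 : 0 ≤ n ⬝ᵥ M *ᵥ x :=
      Finset.sum_nonneg fun i _ => mul_nonneg (le_max_right _ _) (hx i)
    have hq2 : n ⬝ᵥ M *ᵥ p ≤ 0 := by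
      simp only [dotProduct, mulVec]
      refine Finset.sum_nonpos fun i _ => ?_
      rw [Finset.mul_sum]
      refine Finset.sum_nonpos fun j _ => ?_
      rcases eq_or_ne i j with rfl | hij
      · rcases le_total (x i) 0 with h | h
        · have : p i = 0 := max_eq_right h
          simp [this]
        · have : n i = 0 := max_eq_right (by linarith)
          simp [this]
      · have : n i * (M i j * p j) = M i j * (n i * p j) := by ring
        rw [this]
        exact mul_nonpos_of_nonpos_of_nonneg (hoff i j hij)
          (mul_nonneg (le_max_right _ _) (le_max_right _ _))
    have heq : M *ᵥ n = M *ᵥ p - M *ᵥ x := by rw [hnx, mulVec_sub]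
    have : n ⬝ᵥ M *ᵥ n = n ⬝ᵥ M *ᵥ p - n ⬝ᵥ M *ᵥ x := by rw [heq, dotProduct_sub]
    linarith
  intro i
  have := congrFun hn0 i
  simp only [hn, Pi.zero_apply] at this
  have : -x i ≤ 0 := by
    by_contra h
    push_neg at h
    rw [max_eq_left h.le] at this
    linarith
  linarith

theorem stmt_6 {N : ℕ} (A : Matrix (Fin N) (Fin N) ℝ)
    (hpd : (compMat A).PosDef) :
    IsUnit A ∧ ∀ i j, |A⁻¹ i j| ≤ (compMat A)⁻¹ i j := by
  set M := compMat A with hMdef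
  have hoff : ∀ i j, i ≠ j → M i j ≤ 0 := by
    intro i j hij
    simp [hMdef, compMat, hij]
  have hMdet : IsUnit M.det := isUnit_iff_ne_zero.mpr (ne_of_gt hpd.det_pos)
  -- A is invertible
  have hAdet : A.det ≠ 0 := by
    intro h0
    obtain ⟨v, hv, hAv⟩ := Matrix.exists_mulVec_eq_zero_iff.mpr h0
    have h1 : ∀ i, (M *ᵥ fun k => |v k|) i ≤ 0 := by
      intro i
      have := compMat_mulVec_abs_le A v i
      rw [hAv] at this
      simpa using this
    have h2 := key2 M hpd hoff (fun k => -|v k|) ?_ 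
    · apply hv
      funext i
      have := h2 i
      have hnn := abs_nonneg (v i)
      have : |v i| = 0 := by linarith
      exact abs_eq_zero.mp this
    · intro i
      have : (fun k => -|v k|) = -(fun k => |v k|) := rfl
      rw [this, mulVec_neg]
      simpa using h1 i
  have hA : IsUnit A := (Matrix.isUnit_iff_isUnit_det A).mpr (isUnit_iff_ne_zero.mpr hAdet)
  refine ⟨hA, fun i j => ?_⟩
  set u : Fin N → ℝ := fun k => A⁻¹ k j with hu
  have hAu : A *ᵥ u = Pi.single j 1 := by
    have h1 : u = A⁻¹ *ᵥ Pi.single j 1 := by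
      rw [mulVec_single]; funext k; simp [hu]
    rw [h1, mulVec_mulVec, Matrix.mul_nonsing_inv A (isUnit_iff_ne_zero.mpr hAdet), one_mulVec]
  have h1 : ∀ i', (M *ᵥ fun k => |u k|) i' ≤ (Pi.single j 1 : Fin N → ℝ) i' := by
    intro i'
    have := compMat_mulVec_abs_le A u i'
    rw [hAu] at this
    rcases eq_or_ne i' j with rfl | h
    · simpa using this
    · simpa [Pi.single_apply, h] using this
  set w : Fin N → ℝ := (M⁻¹ *ᵥ Pi.single j 1) - fun k => |u k| with hw
  have hMw : ∀ i', 0 ≤ (M *ᵥ w) i' := by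
    intro i'
    rw [hw, mulVec_sub, mulVec_mulVec, Matrix.mul_nonsing_inv M hMdet, one_mulVec]
    have := h1 i'
    simp only [Pi.sub_apply]
    linarith
  have h3 := key2 M hpd hoff w hMw i
  rw [hw] at h3
  simp only [Pi.sub_apply] at h3
  have h4 : (M⁻¹ *ᵥ Pi.single j 1) i = M⁻¹ i j := by
    rw [mulVec_single]; simp
  have : |u i| ≤ M⁻¹ i j := by rw [← h4]; linarith
  simpa [hu] using this
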